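/- Let μ > 0, α > 0, R > 0, and let r₀ > 0, ω₀ ∈ ℝ, y₀ ∈ ℝ. Define r(t) = R·r₀·e^{μt} / √(R² + r₀²(e^{2μt} − 1)) and X : [0,∞) → ℝ³ by X(t) = (r(t)·cos(t+ω₀), y₀·e^{−αt}, r(t)·sin(t+ω₀)). Then X(0) = (r₀ cos ω₀, y₀, r₀ sin ω₀), X satisfies the base system for all t ≥ 0 (writing X(t) = (x(t), y(t), z(t)): x'(t) = −z(t) + μ(1 − (x(t)²+z(t)²)/R²)x(t), y'(t) = −α y(t), z'(t) = x(t) + μ(1 − (x(t)²+z(t)²)/R²)z(t)), and the Euclidean distance from X(t) to the set L = {(x,y,z) ∈ ℝ³ : x² + z² = R², y = 0} tends to 0 as t → ∞. -/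

import Mathlib

open Filter

private lemma rDerivAux (μ R r₀ : ℝ) (hμ : 0 < μ) (hR : 0 < R) (hr₀ : 0 < r₀)
    (r : ℝ → ℝ)
    (hr : ∀ t : ℝ, r t =
      R * r₀ * Real.exp (μ * t) / Real.sqrt (R ^ 2 + r₀ ^ 2 * (Real.exp (2 * μ * t) - 1)))
    (t : ℝ) (ht : 0 ≤ t) :
    HasDerivAt r (μ * (1 - (r t) ^ 2 / R ^ 2) * r t) t := by
  have hfun : r = fun t => R * r₀ * Real.exp (μ * t) /
      Real.sqrt (R ^ 2 + r₀ ^ 2 * (Real.exp (2 * μ * t) - 1)) := funext hr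
  subst hfun
  have hexp1 : (1 : ℝ) ≤ Real.exp (2 * μ * t) :=
    Real.one_le_exp (by positivity)
  have hD : (0:ℝ) < R ^ 2 + r₀ ^ 2 * (Real.exp (2 * μ * t) - 1) := by nlinarith
  have hS : (0:ℝ) < Real.sqrt (R ^ 2 + r₀ ^ 2 * (Real.exp (2 * μ * t) - 1)) :=
    Real.sqrt_pos.mpr hD
  -- numerator derivative
  have hnum : HasDerivAt (fun t => R * r₀ * Real.exp (μ * t))
      (R * r₀ * (Real.exp (μ * t) * μ)) t := by
    have h1 : HasDerivAt (fun t : ℝ => μ * t) μ t := by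
      simpa using (hasDerivAt_id t).const_mul μ
    simpa [mul_comm] using ((Real.hasDerivAt_exp (μ * t)).comp t h1).const_mul (R * r₀)
  -- denominator derivative
  have hDin : HasDerivAt (fun t : ℝ => R ^ 2 + r₀ ^ 2 * (Real.exp (2 * μ * t) - 1))
      (r₀ ^ 2 * (Real.exp (2 * μ * t) * (2 * μ))) t := by
    have h1 : HasDerivAt (fun t : ℝ => 2 * μ * t) (2 * μ) t := by
      simpa using (hasDerivAt_id t).const_mul (2 * μ)
    have h2 := ((Real.hasDerivAt_exp (2 * μ * t)).comp t h1)
    have h3 := (h2.sub_const 1).const_mul (r₀ ^ 2)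
    simpa [mul_comm, mul_assoc, mul_left_comm] using h3.const_add (R ^ 2)
  have hden : HasDerivAt
      (fun t : ℝ => Real.sqrt (R ^ 2 + r₀ ^ 2 * (Real.exp (2 * μ * t) - 1)))
      (r₀ ^ 2 * (Real.exp (2 * μ * t) * (2 * μ)) /
        (2 * Real.sqrt (R ^ 2 + r₀ ^ 2 * (Real.exp (2 * μ * t) - 1)))) t :=
    hDin.sqrt hD.ne'
  have hdiv := hnum.div hden hS.ne'
  refine hdiv.congr_deriv ?_
  beta_reduce
  set S : ℝ := Real.sqrt (R ^ 2 + r₀ ^ 2 * (Real.exp (2 * μ * t) - 1)) with hSdef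
  clear_value S
  have hSne : S ≠ 0 := hS.ne'
  have hE : Real.exp (2 * μ * t) = Real.exp (μ * t) * Real.exp (μ * t) := by
    rw [← Real.exp_add]; ring_nf
  rw [hE]
  field_simp

theorem base_system_trajectory_converges_to_limit_cycle
    (μ α R r₀ ω₀ y₀ : ℝ) (hμ : 0 < μ) (hα : 0 < α) (hR : 0 < R) (hr₀ : 0 < r₀)
    (r : ℝ → ℝ)
    (hr : ∀ t : ℝ, r t =
      R * r₀ * Real.exp (μ * t) / Real.sqrt (R ^ 2 + r₀ ^ 2 * (Real.exp (2 * μ * t) - 1)))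
    (X : ℝ → EuclideanSpace ℝ (Fin 3))
    (hX0 : ∀ t : ℝ, X t 0 = r t * Real.cos (t + ω₀))
    (hX1 : ∀ t : ℝ, X t 1 = y₀ * Real.exp (-α * t))
    (hX2 : ∀ t : ℝ, X t 2 = r t * Real.sin (t + ω₀)) :
    (X 0 0 = r₀ * Real.cos ω₀ ∧ X 0 1 = y₀ ∧ X 0 2 = r₀ * Real.sin ω₀) ∧
    (∀ t : ℝ, 0 ≤ t →
      HasDerivAt (fun s => X s 0)
        (-(X t 2) + μ * (1 - ((X t 0) ^ 2 + (X t 2) ^ 2) / R ^ 2) * X t 0) t ∧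
      HasDerivAt (fun s => X s 1) (-(α * X t 1)) t ∧
      HasDerivAt (fun s => X s 2)
        (X t 0 + μ * (1 - ((X t 0) ^ 2 + (X t 2) ^ 2) / R ^ 2) * X t 2) t) ∧
    Tendsto (fun t : ℝ =>
        Metric.infDist (X t)
          {p : EuclideanSpace ℝ (Fin 3) | (p 0) ^ 2 + (p 2) ^ 2 = R ^ 2 ∧ p 1 = 0})
      atTop (nhds 0) := by
  have hr0 : r 0 = r₀ := by
    rw [hr 0]
    simp [Real.sqrt_sq hR.le]
    field_simp
  have hsc : ∀ t : ℝ, Real.sin (t + ω₀) ^ 2 + Real.cos (t + ω₀) ^ 2 = 1 := fun t =>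
    Real.sin_sq_add_cos_sq _
  refine ⟨⟨by simp [hX0, hr0], by simp [hX1], by simp [hX2, hr0]⟩, ?_, ?_⟩
  · intro t ht
    have hr' := rDerivAux μ R r₀ hμ hR hr₀ r hr t ht
    have hcos : HasDerivAt (fun s : ℝ => Real.cos (s + ω₀)) (-Real.sin (t + ω₀)) t := by
      have h1 : HasDerivAt (fun s : ℝ => s + ω₀) 1 t := (hasDerivAt_id t).add_const ω₀
      simpa [Function.comp_def] using (Real.hasDerivAt_cos (t + ω₀)).comp t h1
    have hsin : HasDerivAt (fun s : ℝ => Real.sin (s + ω₀)) (Real.cos (t + ω₀)) t := by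
      have h1 : HasDerivAt (fun s : ℝ => s + ω₀) 1 t := (hasDerivAt_id t).add_const ω₀
      simpa [Function.comp_def] using (Real.hasDerivAt_sin (t + ω₀)).comp t h1
    have hsq : (X t 0) ^ 2 + (X t 2) ^ 2 = (r t) ^ 2 := by
      rw [hX0, hX2]; nlinarith [hsc t]
    refine ⟨?_, ?_, ?_⟩
    · have hprod := hr'.mul hcos
      have heq : (fun s => X s 0) = fun s => r s * Real.cos (s + ω₀) := funext hX0
      rw [heq, hsq, hX0, hX2]
      refine hprod.congr_deriv ?_
      ring
    · have h1 : HasDerivAt (fun s : ℝ => -α * s) (-α) t := by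
        simpa using (hasDerivAt_id t).const_mul (-α)
      have h2 := ((Real.hasDerivAt_exp (-α * t)).comp t h1).const_mul y₀
      have heq : (fun s => X s 1) = fun s => y₀ * Real.exp (-α * s) := funext hX1
      rw [heq, hX1]
      refine h2.congr_deriv ?_
      ring
    · have hprod := hr'.mul hsin
      have heq : (fun s => X s 2) = fun s => r s * Real.sin (s + ω₀) := funext hX2
      rw [heq, hsq, hX0, hX2]
      refine hprod.congr_deriv ?_
      ring
  · -- convergence
    have hrEq : ∀ᶠ t : ℝ in atTop, r t =
        R * r₀ / Real.sqrt ((R ^ 2 - r₀ ^ 2) * Real.exp (-(2 * μ * t)) + r₀ ^ 2) := by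
      filter_upwards [eventually_ge_atTop (0 : ℝ)] with t ht
      have hexp1 : (1 : ℝ) ≤ Real.exp (2 * μ * t) := Real.one_le_exp (by positivity)
      have hD : (0:ℝ) < R ^ 2 + r₀ ^ 2 * (Real.exp (2 * μ * t) - 1) := by nlinarith
      have hS : (0:ℝ) < Real.sqrt (R ^ 2 + r₀ ^ 2 * (Real.exp (2 * μ * t) - 1)) :=
        Real.sqrt_pos.mpr hD
      have key : (R ^ 2 - r₀ ^ 2) * Real.exp (-(2 * μ * t)) + r₀ ^ 2 =
          Real.exp (-(μ * t)) ^ 2 * (R ^ 2 + r₀ ^ 2 * (Real.exp (2 * μ * t) - 1)) := by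
        have h1 : Real.exp (-(2 * μ * t)) = (Real.exp (2 * μ * t))⁻¹ := by
          rw [← Real.exp_neg]
        have h2 : Real.exp (-(μ * t)) ^ 2 = (Real.exp (2 * μ * t))⁻¹ := by
          rw [sq, ← Real.exp_add, ← Real.exp_neg]; ring_nf
        rw [h1, h2]
        field_simp
        ring
      rw [hr t, key, Real.sqrt_mul (sq_nonneg _), Real.sqrt_sq (Real.exp_pos _).le,
        Real.exp_neg]
      field_simp
    have hv : Tendsto (fun t : ℝ => (R ^ 2 - r₀ ^ 2) * Real.exp (-(2 * μ * t)) + r₀ ^ 2)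
        atTop (nhds (r₀ ^ 2)) := by
      have h1 : Tendsto (fun t : ℝ => 2 * μ * t) atTop atTop :=
        Tendsto.const_mul_atTop (by positivity) tendsto_id
      have h2 : Tendsto (fun t : ℝ => Real.exp (-(2 * μ * t))) atTop (nhds 0) :=
        Real.tendsto_exp_neg_atTop_nhds_zero.comp h1
      have h3 := (h2.const_mul (R ^ 2 - r₀ ^ 2)).add_const (r₀ ^ 2)
      simpa using h3
    have hcont : ContinuousAt (fun v : ℝ => R * r₀ / Real.sqrt v) (r₀ ^ 2) := by
      apply ContinuousAt.div continuousAt_const Real.continuous_sqrt.continuousAt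
      rw [Real.sqrt_sq hr₀.le]; exact hr₀.ne'
    have hrLim : Tendsto r atTop (nhds R) := by
      have hcomp := hcont.tendsto.comp hv
      have hval : R * r₀ / Real.sqrt (r₀ ^ 2) = R := by
        rw [Real.sqrt_sq hr₀.le]; field_simp
      rw [hval] at hcomp
      exact Tendsto.congr' (Filter.EventuallyEq.symm hrEq) (by simpa [Function.comp_def] using hcomp)
    have hyLim : Tendsto (fun t : ℝ => y₀ * Real.exp (-α * t)) atTop (nhds 0) := by
      have h1 : Tendsto (fun t : ℝ => α * t) atTop atTop :=
        Tendsto.const_mul_atTop hα tendsto_id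
      have h2 := Real.tendsto_exp_neg_atTop_nhds_zero.comp h1
      have h3 := h2.const_mul y₀
      simpa [Function.comp, neg_mul] using h3
    have hbLim : Tendsto
        (fun t : ℝ => Real.sqrt ((r t - R) ^ 2 + (y₀ * Real.exp (-α * t)) ^ 2))
        atTop (nhds 0) := by
      have hin : Tendsto (fun t : ℝ => (r t - R) ^ 2 + (y₀ * Real.exp (-α * t)) ^ 2)
          atTop (nhds 0) := by
        have h1 := (hrLim.sub_const R).pow 2
        have h2 := hyLim.pow 2
        simpa using h1.add h2
      have hsq := (Real.continuous_sqrt.tendsto' 0 0 Real.sqrt_zero).comp hin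
      simpa [Function.comp_def] using hsq
    refine tendsto_of_tendsto_of_tendsto_of_le_of_le' tendsto_const_nhds hbLim
      (Eventually.of_forall fun t => Metric.infDist_nonneg)
      (Eventually.of_forall fun t => ?_)
    set P : EuclideanSpace ℝ (Fin 3) :=
      (WithLp.equiv 2 (Fin 3 → ℝ)).symm
        ![R * Real.cos (t + ω₀), 0, R * Real.sin (t + ω₀)] with hPdef
    have hP0 : P 0 = R * Real.cos (t + ω₀) := rfl
    have hP1 : P 1 = 0 := rfl
    have hP2 : P 2 = R * Real.sin (t + ω₀) := rfl
    have hPmem : P ∈ {p : EuclideanSpace ℝ (Fin 3) |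
        (p 0) ^ 2 + (p 2) ^ 2 = R ^ 2 ∧ p 1 = 0} := by
      refine ⟨?_, hP1⟩
      rw [hP0, hP2]; nlinarith [hsc t]
    have h1 := Metric.infDist_le_dist_of_mem (x := X t) hPmem
    have h2 : dist (X t) P =
        Real.sqrt ((r t - R) ^ 2 + (y₀ * Real.exp (-α * t)) ^ 2) := by
      rw [EuclideanSpace.dist_eq, Fin.sum_univ_three, hX0, hX1, hX2, hP0, hP1, hP2]
      simp only [Real.dist_eq, sq_abs]
      congr 1
      nlinarith [hsc t]
    rw [h2] at h1
    exact h1
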